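/- Let N ≥ 2 be an integer and let c = (c_i)_{0≤i≤N} be a differentiable solution of the N-truncated isolated DGED system on an interval I ⊆ ℝ. Then for every sequence (g_i)_{i≥0} of real numbers and every t ∈ I, d/dt ∑_{i=0}^N g_i c_i(t) = ∑_{k=1}^{N−1} ∑_{i=k}^{N} ∑_{j=0}^{N−k} (g_{j+k} + g_{i−k} − g_j − g_i) a(i,j;k) c_i(t) c_j(t). -/

import Mathlib

open Finset

/-- Truncated operator `Q^N_{1,i}`. -/
noncomputable def QN1 (a : ℕ → ℕ → ℕ → ℝ) (N : ℕ) (c : ℕ → ℝ) (i : ℕ) : ℝ :=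
  ∑ k ∈ Finset.Icc 1 (N - i), ∑ j ∈ Finset.Icc 0 (N - k), a (i + k) j k * c (i + k) * c j

/-- Truncated operator `Q^N_{2,i}`. -/
noncomputable def QN2 (a : ℕ → ℕ → ℕ → ℝ) (N : ℕ) (c : ℕ → ℝ) (i : ℕ) : ℝ :=
  -∑ k ∈ Finset.Icc 1 (N - i), ∑ j ∈ Finset.Icc k N, a j i k * c j * c i

/-- Truncated operator `Q^N_{3,i}`. -/
noncomputable def QN3 (a : ℕ → ℕ → ℕ → ℝ) (N : ℕ) (c : ℕ → ℝ) (i : ℕ) : ℝ :=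
  ∑ k ∈ Finset.Icc 1 i, ∑ j ∈ Finset.Icc k N, a j (i - k) k * c j * c (i - k)

/-- Truncated operator `Q^N_{4,i}`. -/
noncomputable def QN4 (a : ℕ → ℕ → ℕ → ℝ) (N : ℕ) (c : ℕ → ℝ) (i : ℕ) : ℝ :=
  -∑ k ∈ Finset.Icc 1 i, ∑ j ∈ Finset.Icc 0 (N - k), a i j k * c j * c i

/-- `c` is a solution of the `N`-truncated isolated DGED system on the set `I`. -/
def IsTruncSolIso (a : ℕ → ℕ → ℕ → ℝ) (N : ℕ) (I : Set ℝ) (c : ℕ → ℝ → ℝ) : Prop :=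
  ∀ t ∈ I,
    HasDerivAt (c 0) (QN1 a N (fun n => c n t) 0 + QN2 a N (fun n => c n t) 0) t ∧
    (∀ i, 1 ≤ i → i ≤ N - 1 →
      HasDerivAt (c i)
        (QN1 a N (fun n => c n t) i + QN2 a N (fun n => c n t) i +
          QN3 a N (fun n => c n t) i + QN4 a N (fun n => c n t) i) t) ∧
    HasDerivAt (c N) (QN3 a N (fun n => c n t) N + QN4 a N (fun n => c n t) N) t

lemma reindex1 (N : ℕ) (f : ℕ → ℕ → ℝ) :
    ∑ i ∈ range (N+1), ∑ k ∈ Icc 1 (N - i), f (i + k) k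
      = ∑ k ∈ Icc 1 N, ∑ i ∈ Icc k N, f i k := by
  rw [Finset.sum_sigma', Finset.sum_sigma']
  refine Finset.sum_nbij' (fun p => ⟨p.2, p.1 + p.2⟩) (fun q => ⟨q.2 - q.1, q.1⟩) ?_ ?_ ?_ ?_ ?_ <;>
    rintro ⟨x, y⟩ h <;> simp_all [Finset.mem_sigma] <;> omega

lemma reindex2 (N : ℕ) (f : ℕ → ℕ → ℝ) :
    ∑ j ∈ range (N+1), ∑ k ∈ Icc 1 (N - j), f j k
      = ∑ k ∈ Icc 1 N, ∑ j ∈ Icc 0 (N - k), f j k := by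
  rw [Finset.sum_sigma', Finset.sum_sigma']
  refine Finset.sum_nbij' (fun p => ⟨p.2, p.1⟩) (fun q => ⟨q.2, q.1⟩) ?_ ?_ ?_ ?_ ?_ <;>
    rintro ⟨x, y⟩ h <;> simp_all [Finset.mem_sigma] <;> omega

lemma reindex3 (N : ℕ) (f : ℕ → ℕ → ℝ) :
    ∑ i ∈ range (N+1), ∑ k ∈ Icc 1 i, f (i - k) k
      = ∑ k ∈ Icc 1 N, ∑ m ∈ Icc 0 (N - k), f m k := by
  rw [Finset.sum_sigma', Finset.sum_sigma']
  refine Finset.sum_nbij' (fun p => ⟨p.2, p.1 - p.2⟩) (fun q => ⟨q.2 + q.1, q.1⟩) ?_ ?_ ?_ ?_ ?_ <;>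
    rintro ⟨x, y⟩ h <;> simp_all [Finset.mem_sigma] <;> omega

lemma reindex4 (N : ℕ) (f : ℕ → ℕ → ℝ) :
    ∑ i ∈ range (N+1), ∑ k ∈ Icc 1 i, f i k
      = ∑ k ∈ Icc 1 N, ∑ i ∈ Icc k N, f i k := by
  rw [Finset.sum_sigma', Finset.sum_sigma']
  refine Finset.sum_nbij' (fun p => ⟨p.2, p.1⟩) (fun q => ⟨q.2, q.1⟩) ?_ ?_ ?_ ?_ ?_ <;>
    rintro ⟨x, y⟩ h <;> simp_all [Finset.mem_sigma] <;> omega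

lemma key_identity (a : ℕ → ℕ → ℕ → ℝ)
    (hzero : ∀ p : ℕ, 1 ≤ p → a p 0 p = 0)
    (N : ℕ) (hN : 2 ≤ N) (cc : ℕ → ℝ) (g : ℕ → ℝ) :
    ∑ i ∈ Finset.range (N + 1),
        g i * (QN1 a N cc i + QN2 a N cc i + QN3 a N cc i + QN4 a N cc i)
      = ∑ k ∈ Finset.Icc 1 (N - 1), ∑ i ∈ Finset.Icc k N, ∑ j ∈ Finset.Icc 0 (N - k),
          (g (j + k) + g (i - k) - g j - g i) * a i j k * cc i * cc j := by
  have E1 : ∑ i ∈ range (N+1), g i * QN1 a N cc i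
      = ∑ k ∈ Icc 1 N, ∑ i ∈ Icc k N, ∑ j ∈ Icc 0 (N-k),
          g (i-k) * (a i j k * cc i * cc j) := by
    rw [← reindex1 N (fun i' k => ∑ j ∈ Icc 0 (N-k), g (i'-k) * (a i' j k * cc i' * cc j))]
    refine Finset.sum_congr rfl fun i _ => ?_
    rw [QN1, Finset.mul_sum]
    refine Finset.sum_congr rfl fun k hk => ?_
    rw [Finset.mul_sum]
    exact Finset.sum_congr rfl fun j _ => by rw [Nat.add_sub_cancel]
  have E2 : ∑ i ∈ range (N+1), g i * QN2 a N cc i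
      = ∑ k ∈ Icc 1 N, ∑ i ∈ Icc k N, ∑ j ∈ Icc 0 (N-k),
          -(g j * (a i j k * cc i * cc j)) := by
    rw [show (∑ k ∈ Icc 1 N, ∑ i ∈ Icc k N, ∑ j ∈ Icc 0 (N-k),
          -(g j * (a i j k * cc i * cc j)))
        = ∑ k ∈ Icc 1 N, ∑ j ∈ Icc 0 (N-k), ∑ i ∈ Icc k N,
          -(g j * (a i j k * cc i * cc j))
        from Finset.sum_congr rfl fun k _ => Finset.sum_comm]
    rw [← reindex2 N (fun J k => ∑ i ∈ Icc k N, -(g J * (a i J k * cc i * cc J)))]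
    refine Finset.sum_congr rfl fun i _ => ?_
    rw [QN2, mul_neg, Finset.mul_sum, ← Finset.sum_neg_distrib]
    refine Finset.sum_congr rfl fun k _ => ?_
    rw [Finset.mul_sum, ← Finset.sum_neg_distrib]
  have E3 : ∑ i ∈ range (N+1), g i * QN3 a N cc i
      = ∑ k ∈ Icc 1 N, ∑ i ∈ Icc k N, ∑ j ∈ Icc 0 (N-k),
          g (j+k) * (a i j k * cc i * cc j) := by
    rw [show (∑ k ∈ Icc 1 N, ∑ i ∈ Icc k N, ∑ j ∈ Icc 0 (N-k),
          g (j+k) * (a i j k * cc i * cc j))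
        = ∑ k ∈ Icc 1 N, ∑ j ∈ Icc 0 (N-k), ∑ i ∈ Icc k N,
          g (j+k) * (a i j k * cc i * cc j)
        from Finset.sum_congr rfl fun k _ => Finset.sum_comm]
    rw [← reindex3 N (fun m k => ∑ j ∈ Icc k N, g (m+k) * (a j m k * cc j * cc m))]
    refine Finset.sum_congr rfl fun i _ => ?_
    rw [QN3, Finset.mul_sum]
    refine Finset.sum_congr rfl fun k hk => ?_
    rw [Finset.mul_sum]
    have hk' : k ≤ i := (Finset.mem_Icc.mp hk).2
    exact Finset.sum_congr rfl fun j _ => by rw [Nat.sub_add_cancel hk']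
  have E4 : ∑ i ∈ range (N+1), g i * QN4 a N cc i
      = ∑ k ∈ Icc 1 N, ∑ i ∈ Icc k N, ∑ j ∈ Icc 0 (N-k),
          -(g i * (a i j k * cc i * cc j)) := by
    rw [← reindex4 N (fun i k => ∑ j ∈ Icc 0 (N-k), -(g i * (a i j k * cc i * cc j)))]
    refine Finset.sum_congr rfl fun i _ => ?_
    rw [QN4, mul_neg, Finset.mul_sum, ← Finset.sum_neg_distrib]
    refine Finset.sum_congr rfl fun k _ => ?_
    rw [Finset.mul_sum, ← Finset.sum_neg_distrib]
    exact Finset.sum_congr rfl fun j _ => by ring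
  have expand : ∑ i ∈ range (N+1),
      g i * (QN1 a N cc i + QN2 a N cc i + QN3 a N cc i + QN4 a N cc i)
      = (∑ i ∈ range (N+1), g i * QN1 a N cc i)
        + (∑ i ∈ range (N+1), g i * QN2 a N cc i)
        + (∑ i ∈ range (N+1), g i * QN3 a N cc i)
        + (∑ i ∈ range (N+1), g i * QN4 a N cc i) := by
    simp only [mul_add, Finset.sum_add_distrib]
  rw [expand, E1, E2, E3, E4]
  rw [show ((∑ k ∈ Icc 1 N, ∑ i ∈ Icc k N, ∑ j ∈ Icc 0 (N-k), g (i-k) * (a i j k * cc i * cc j))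
      + (∑ k ∈ Icc 1 N, ∑ i ∈ Icc k N, ∑ j ∈ Icc 0 (N-k), -(g j * (a i j k * cc i * cc j)))
      + (∑ k ∈ Icc 1 N, ∑ i ∈ Icc k N, ∑ j ∈ Icc 0 (N-k), g (j+k) * (a i j k * cc i * cc j))
      + (∑ k ∈ Icc 1 N, ∑ i ∈ Icc k N, ∑ j ∈ Icc 0 (N-k), -(g i * (a i j k * cc i * cc j))))
      = ∑ k ∈ Icc 1 N, ∑ i ∈ Icc k N, ∑ j ∈ Icc 0 (N-k),
          (g (j + k) + g (i - k) - g j - g i) * a i j k * cc i * cc j by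
    simp only [← Finset.sum_add_distrib]
    exact Finset.sum_congr rfl fun k _ => Finset.sum_congr rfl fun i _ =>
      Finset.sum_congr rfl fun j _ => by ring]
  obtain ⟨m, rfl⟩ : ∃ m, N = m + 1 := ⟨N - 1, by omega⟩
  rw [Finset.sum_Icc_succ_top (by omega)]
  have htop : ∑ i ∈ Icc (m+1) (m+1), ∑ j ∈ Icc 0 ((m+1) - (m+1)),
      (g (j + (m+1)) + g (i - (m+1)) - g j - g i) * a i j (m+1) * cc i * cc j = 0 := by
    simp [Nat.sub_self, hzero (m+1) (by omega)]
  rw [htop, add_zero]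
  simp

/-- Proposition 4.1: the evolution of generalized moments for the truncated isolated system. -/
theorem truncated_isolated_moment_identity
    (a : ℕ → ℕ → ℕ → ℝ) (ha : ∀ i j k, 0 ≤ a i j k)
    (hzero : ∀ p : ℕ, 1 ≤ p → a p 0 p = 0)
    (N : ℕ) (hN : 2 ≤ N) (I : Set ℝ) (c : ℕ → ℝ → ℝ)
    (hc : IsTruncSolIso a N I c)
    (g : ℕ → ℝ) (t : ℝ) (ht : t ∈ I) :
    HasDerivAt (fun s => ∑ i ∈ Finset.range (N + 1), g i * c i s)
      (∑ k ∈ Finset.Icc 1 (N - 1), ∑ i ∈ Finset.Icc k N, ∑ j ∈ Finset.Icc 0 (N - k),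
        (g (j + k) + g (i - k) - g j - g i) * a i j k * c i t * c j t) t := by
  obtain ⟨h0, hmid, hNtop⟩ := hc t ht
  have hd : ∀ i ∈ Finset.range (N + 1),
      HasDerivAt (fun s => g i * c i s)
        (g i * (QN1 a N (fun n => c n t) i + QN2 a N (fun n => c n t) i +
          QN3 a N (fun n => c n t) i + QN4 a N (fun n => c n t) i)) t := by
    intro i hi
    have hi' : i ≤ N := by simpa [Nat.lt_succ_iff] using Finset.mem_range.mp hi
    refine HasDerivAt.const_mul _ ?_
    rcases eq_or_ne i 0 with rfl | hi0
    · have hq3 : QN3 a N (fun n => c n t) 0 = 0 := by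
        rw [QN3, Finset.Icc_eq_empty (by omega)]; simp
      have hq4 : QN4 a N (fun n => c n t) 0 = 0 := by
        rw [QN4, Finset.Icc_eq_empty (by omega)]; simp
      rw [hq3, hq4, add_zero, add_zero]; exact h0
    rcases eq_or_ne i N with rfl | hiN
    · have hq1 : QN1 a i (fun n => c n t) i = 0 := by
        rw [QN1, Nat.sub_self, Finset.Icc_eq_empty (by omega)]; simp
      have hq2 : QN2 a i (fun n => c n t) i = 0 := by
        rw [QN2, Nat.sub_self, Finset.Icc_eq_empty (by omega)]; simp
      rw [hq1, hq2, zero_add, zero_add]; exact hNtop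
    · exact hmid i (by omega) (by omega)
  have H := HasDerivAt.fun_sum hd
  rwa [key_identity a hzero N hN (fun n => c n t) g] at H
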